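/- arXiv:2305.01792 — 2 statements merged into one kernel-verified Lean document; each statement's English description precedes it below -/
import Mathlib

section
/- Let θ ∈ (0, 1/2], let n ≥ 1 be an integer, let y ∈ S_{T[θ,S_n]} with basis expansion y = Σ_{i=1}^∞ b_i e_i, let j be a positive integer, and let ε ∈ {−1, 1}. Then the vector x = Σ_{i≠j} θ b_i e_i + ε e_j belongs to S_{T[θ,S_n]}, i.e., ‖x‖ = 1. -/
open scoped BigOperators

noncomputable section

/-- Projection of a finitely supported vector onto the coordinates in `E`. -/
def tsProj (E : Finset ℕ+) (x : ℕ+ →₀ ℝ) : ℕ+ →₀ ℝ :=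
  x.filter fun i => i ∈ E

/-- The Schreier families `S_n` on the positive integers:
`S₁` consists of the sets `F` with `|F| ≤ min F` (together with `∅`), and `S_{n+1}`
consists of unions `F₁ ∪ ⋯ ∪ F_d` of nonempty members `F₁ < ⋯ < F_d` of `S_n`
with `d ≤ min F₁` (together with `∅`). -/
def Schreier : ℕ → Set (Finset ℕ+)
  | 0 => {F | F.card ≤ 1}
  | 1 => {F | ∀ a ∈ F, F.card ≤ (a : ℕ)}
  | n + 2 =>
      {F | F = ∅ ∨
        ∃ (d : ℕ) (G : Fin d → Finset ℕ+),
          0 < d ∧ (∀ i, G i ∈ Schreier (n + 1)) ∧ (∀ i, (G i).Nonempty) ∧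
          (∀ i j : Fin d, i < j → ∀ a ∈ G i, ∀ b ∈ G j, a < b) ∧
          (∀ i, ∀ a ∈ G i, d ≤ (a : ℕ)) ∧ F = Finset.univ.biUnion G}

/-- A tuple of nonempty finite sets `E 0 < E 1 < ⋯` whose set of minima belongs to `S`. -/
def TsAdmissible (S : Set (Finset ℕ+)) {d : ℕ} (E : Fin d → Finset ℕ+) : Prop :=
  (∀ i, (E i).Nonempty) ∧
  (∀ i j : Fin d, i < j → ∀ a ∈ E i, ∀ b ∈ E j, a < b) ∧
  ∃ μ : Fin d → ℕ+, (∀ i, IsLeast (↑(E i) : Set ℕ+) (μ i)) ∧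
    Finset.univ.image μ ∈ S

/-- The iterated norms `‖·‖_m` in the construction of the Tsirelson norm:
`‖x‖₀` is the supremum norm and
`‖x‖_{m+1} = max(‖x‖_m, sup{θ ∑ᵢ ‖Eᵢ x‖_m : E₁ < ⋯ < E_d, {min Eᵢ} ∈ S})`. -/
def tnormAux (θ : ℝ) (S : Set (Finset ℕ+)) : ℕ → (ℕ+ →₀ ℝ) → ℝ
  | 0, x => ⨆ i, |x i|
  | m + 1, x =>
      max (tnormAux θ S m x)
        (sSup {r : ℝ | ∃ (d : ℕ) (E : Fin d → Finset ℕ+), TsAdmissible S E ∧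
          r = θ * ∑ i, tnormAux θ S m (tsProj (E i) x)})

/-- The Tsirelson norm `‖x‖_{θ,S} = sup_m ‖x‖_m` on `c₀₀`. -/
def tnorm (θ : ℝ) (S : Set (Finset ℕ+)) (x : ℕ+ →₀ ℝ) : ℝ :=
  ⨆ m : ℕ, tnormAux θ S m x

/-- `X`, together with the sequence `e` of unit vectors, is (a realization of) the
Tsirelson space `T[θ, S_n]`: a Banach space containing `c₀₀` isometrically
(w.r.t. the Tsirelson norm) as a dense subspace, in which `(e i)` is a
(1-unconditional) basis, i.e. every `x` has a unique expansion `x = ∑ᵢ aᵢ eᵢ`. -/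
structure IsTsirelsonSpace (θ : ℝ) (n : ℕ) (X : Type*) [NormedAddCommGroup X]
    [NormedSpace ℝ X] (e : ℕ+ → X) : Prop where
  complete : CompleteSpace X
  norm_embed : ∀ a : ℕ+ →₀ ℝ, ‖a.sum fun i c => c • e i‖ = tnorm θ (Schreier n) a
  dense_embed : DenseRange fun a : ℕ+ →₀ ℝ => a.sum fun i c => c • e i
  expansion : ∀ x : X, ∃! a : ℕ+ → ℝ, HasSum (fun i => a i • e i) x

namespace TsAux

/-- The `ℓ¹` norm of a finitely supported vector. -/
def l1 (x : ℕ+ →₀ ℝ) : ℝ := ∑ i ∈ x.support, |x i|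

lemma l1_nonneg (x : ℕ+ →₀ ℝ) : 0 ≤ l1 x :=
  Finset.sum_nonneg fun _ _ => abs_nonneg _

lemma abs_le_l1 (x : ℕ+ →₀ ℝ) (i : ℕ+) : |x i| ≤ l1 x := by
  by_cases h : i ∈ x.support
  · exact Finset.single_le_sum (f := fun k => |x k|) (fun _ _ => abs_nonneg _) h
  · rw [Finsupp.notMem_support_iff.mp h, abs_zero]; exact l1_nonneg x

lemma bddAbove_abs_range (x : ℕ+ →₀ ℝ) : BddAbove (Set.range fun i : ℕ+ => |x i|) := by
  refine ⟨l1 x, ?_⟩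
  rintro r ⟨i, rfl⟩
  exact abs_le_l1 x i

variable {θ : ℝ} {S : Set (Finset ℕ+)}

lemma tnormAux_zero (x : ℕ+ →₀ ℝ) : tnormAux θ S 0 x = ⨆ i, |x i| := rfl

lemma tnormAux_succ (m : ℕ) (x : ℕ+ →₀ ℝ) :
    tnormAux θ S (m + 1) x =
      max (tnormAux θ S m x)
        (sSup {r : ℝ | ∃ (d : ℕ) (E : Fin d → Finset ℕ+), TsAdmissible S E ∧
          r = θ * ∑ i, tnormAux θ S m (tsProj (E i) x)}) := rfl

lemma abs_le_tnormAux_zero (x : ℕ+ →₀ ℝ) (i : ℕ+) : |x i| ≤ tnormAux θ S 0 x :=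
  le_ciSup (bddAbove_abs_range x) i

lemma tnormAux_nonneg (m : ℕ) (x : ℕ+ →₀ ℝ) : 0 ≤ tnormAux θ S m x := by
  induction m with
  | zero => exact Real.iSup_nonneg fun i => abs_nonneg _
  | succ m ih => exact ih.trans (le_max_left _ _)

lemma tsProj_apply (E : Finset ℕ+) (x : ℕ+ →₀ ℝ) (i : ℕ+) :
    tsProj E x i = if i ∈ E then x i else 0 := rfl

/-- Members of an admissible family are pairwise disjoint. -/
lemma tsAdmissible_mem_unique {d : ℕ} {E : Fin d → Finset ℕ+}
    (hE : TsAdmissible S E) {i k : Fin d} {a : ℕ+} (hi : a ∈ E i) (hk : a ∈ E k) :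
    i = k := by
  by_contra hne
  rcases lt_or_gt_of_ne hne with h | h
  · exact absurd (hE.2.1 i k h a hi a hk) (lt_irrefl a)
  · exact absurd (hE.2.1 k i h a hk a hi) (lt_irrefl a)

lemma support_tsProj (E : Finset ℕ+) (x : ℕ+ →₀ ℝ) :
    (tsProj E x).support = x.support.filter (fun i => i ∈ E) := by
  ext i
  simp only [Finsupp.mem_support_iff, tsProj_apply, Finset.mem_filter]
  split_ifs with h <;> simp [h]

lemma l1_tsProj (E : Finset ℕ+) (x : ℕ+ →₀ ℝ) :
    l1 (tsProj E x) = ∑ k ∈ x.support.filter (fun k => k ∈ E), |x k| := by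
  rw [l1, support_tsProj]
  refine Finset.sum_congr rfl fun k hk => ?_
  rw [Finset.mem_filter] at hk
  rw [tsProj_apply, if_pos hk.2]

lemma sum_l1_tsProj_le (x : ℕ+ →₀ ℝ) {d : ℕ} {E : Fin d → Finset ℕ+}
    (hE : TsAdmissible S E) :
    ∑ i, l1 (tsProj (E i) x) ≤ l1 x := by
  classical
  have h1 : ∑ i, l1 (tsProj (E i) x)
      = ∑ i, ∑ k ∈ x.support.filter (fun k => k ∈ E i), |x k| :=
    Finset.sum_congr rfl fun i _ => l1_tsProj (E i) x
  rw [h1, ← Finset.sum_biUnion]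
  · refine Finset.sum_le_sum_of_subset_of_nonneg ?_ (fun k _ _ => abs_nonneg _)
    intro k hk
    rw [Finset.mem_biUnion] at hk
    obtain ⟨i, _, hk⟩ := hk
    exact (Finset.mem_filter.mp hk).1
  · intro i _ k _ hik
    refine Finset.disjoint_left.mpr fun a ha hak => ?_
    rw [Finset.mem_filter] at ha hak
    exact hik (tsAdmissible_mem_unique hE ha.2 hak.2)

lemma tnormAux_le_l1 (hθ0 : 0 ≤ θ) (hθ1 : θ ≤ 1) (m : ℕ) (x : ℕ+ →₀ ℝ) :
    tnormAux θ S m x ≤ l1 x := by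
  induction m generalizing x with
  | zero => exact ciSup_le fun i => abs_le_l1 x i
  | succ m ih =>
    rw [tnormAux_succ]
    refine max_le (ih x) (Real.sSup_le ?_ (l1_nonneg x))
    rintro r ⟨d, E, hE, rfl⟩
    calc θ * ∑ i, tnormAux θ S m (tsProj (E i) x)
        ≤ 1 * ∑ i, l1 (tsProj (E i) x) := by
          refine mul_le_mul hθ1 (Finset.sum_le_sum fun i _ => ih _) ?_ zero_le_one
          exact Finset.sum_nonneg fun i _ => tnormAux_nonneg m _
      _ = ∑ i, l1 (tsProj (E i) x) := one_mul _
      _ ≤ l1 x := sum_l1_tsProj_le x hE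

lemma bddAbove_auxSet (hθ0 : 0 ≤ θ) (hθ1 : θ ≤ 1) (m : ℕ) (x : ℕ+ →₀ ℝ) :
    BddAbove {r : ℝ | ∃ (d : ℕ) (E : Fin d → Finset ℕ+), TsAdmissible S E ∧
      r = θ * ∑ i, tnormAux θ S m (tsProj (E i) x)} := by
  refine ⟨l1 x, ?_⟩
  rintro r ⟨d, E, hE, rfl⟩
  calc θ * ∑ i, tnormAux θ S m (tsProj (E i) x)
      ≤ 1 * ∑ i, l1 (tsProj (E i) x) := by
        refine mul_le_mul hθ1 (Finset.sum_le_sum fun i _ => tnormAux_le_l1 hθ0 hθ1 m _) ?_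
          zero_le_one
        exact Finset.sum_nonneg fun i _ => tnormAux_nonneg m _
    _ = ∑ i, l1 (tsProj (E i) x) := one_mul _
    _ ≤ l1 x := sum_l1_tsProj_le x hE

lemma elem_le_tnormAux_succ (hθ0 : 0 ≤ θ) (hθ1 : θ ≤ 1) {m : ℕ} {x : ℕ+ →₀ ℝ}
    {d : ℕ} {E : Fin d → Finset ℕ+} (hE : TsAdmissible S E) :
    θ * ∑ i, tnormAux θ S m (tsProj (E i) x) ≤ tnormAux θ S (m + 1) x := by
  rw [tnormAux_succ]
  exact le_trans (le_csSup (bddAbove_auxSet hθ0 hθ1 m x) ⟨d, E, hE, rfl⟩) (le_max_right _ _)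

lemma tnormAux_le_succ (m : ℕ) (x : ℕ+ →₀ ℝ) :
    tnormAux θ S m x ≤ tnormAux θ S (m + 1) x := by
  rw [tnormAux_succ]; exact le_max_left _ _

lemma tnormAux_le_tnorm (hθ0 : 0 ≤ θ) (hθ1 : θ ≤ 1) (m : ℕ) (x : ℕ+ →₀ ℝ) :
    tnormAux θ S m x ≤ tnorm θ S x := by
  refine le_ciSup (f := fun m => tnormAux θ S m x) ⟨l1 x, ?_⟩ m
  rintro r ⟨m', rfl⟩
  exact tnormAux_le_l1 hθ0 hθ1 m' x

lemma abs_le_tnorm (hθ0 : 0 ≤ θ) (hθ1 : θ ≤ 1) (x : ℕ+ →₀ ℝ) (i : ℕ+) :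
    |x i| ≤ tnorm θ S x :=
  (abs_le_tnormAux_zero x i).trans (tnormAux_le_tnorm hθ0 hθ1 0 x)

lemma tsProj_smul (E : Finset ℕ+) (t : ℝ) (x : ℕ+ →₀ ℝ) :
    tsProj E (t • x) = t • tsProj E x := by
  ext i
  simp only [tsProj_apply, Finsupp.smul_apply, smul_eq_mul]
  split_ifs <;> simp

lemma tsProj_add (E : Finset ℕ+) (x z : ℕ+ →₀ ℝ) :
    tsProj E (x + z) = tsProj E x + tsProj E z := by
  ext i
  simp only [tsProj_apply, Finsupp.add_apply]
  split_ifs <;> simp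

lemma tsProj_erase (E : Finset ℕ+) (k : ℕ+) (x : ℕ+ →₀ ℝ) :
    tsProj E (x.erase k) = (tsProj E x).erase k := by
  ext i
  simp only [tsProj_apply, Finsupp.erase_apply]
  split_ifs <;> simp

lemma tsProj_single (E : Finset ℕ+) (k : ℕ+) (c : ℝ) :
    tsProj E (Finsupp.single k c) = if k ∈ E then Finsupp.single k c else 0 := by
  classical
  ext i
  by_cases hk : k ∈ E <;> by_cases hi : i ∈ E <;> by_cases hki : k = i <;>
    simp_all [tsProj_apply, Finsupp.single_apply]

lemma tnormAux_smul_le (hθ0 : 0 ≤ θ) (hθ1 : θ ≤ 1) {t : ℝ} (ht : 0 ≤ t)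
    (m : ℕ) (x : ℕ+ →₀ ℝ) :
    tnormAux θ S m (t • x) ≤ t * tnormAux θ S m x := by
  induction m generalizing x with
  | zero =>
    refine ciSup_le fun i => ?_
    rw [Finsupp.smul_apply, smul_eq_mul, abs_mul, abs_of_nonneg ht]
    exact mul_le_mul_of_nonneg_left (abs_le_tnormAux_zero x i) ht
  | succ m ih =>
    rw [tnormAux_succ]
    refine max_le ((ih x).trans (mul_le_mul_of_nonneg_left (tnormAux_le_succ m x) ht))
      (Real.sSup_le ?_ (mul_nonneg ht (tnormAux_nonneg _ x)))
    rintro r ⟨d, E, hE, rfl⟩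
    calc θ * ∑ i, tnormAux θ S m (tsProj (E i) (t • x))
        ≤ θ * ∑ i, t * tnormAux θ S m (tsProj (E i) x) := by
          refine mul_le_mul_of_nonneg_left (Finset.sum_le_sum fun i _ => ?_) hθ0
          rw [tsProj_smul]
          exact ih _
      _ = t * (θ * ∑ i, tnormAux θ S m (tsProj (E i) x)) := by
          rw [← Finset.mul_sum]; ring
      _ ≤ t * tnormAux θ S (m + 1) x :=
          mul_le_mul_of_nonneg_left (elem_le_tnormAux_succ hθ0 hθ1 hE) ht

lemma sum_ite_mem_le_one {d : ℕ} {E : Fin d → Finset ℕ+} (hE : TsAdmissible S E) (k : ℕ+) :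
    ∑ i : Fin d, (if k ∈ E i then (1 : ℝ) else 0) ≤ 1 := by
  classical
  rw [Finset.sum_boole]
  norm_cast
  refine Finset.card_le_one.mpr fun i hi i' hi' => ?_
  rw [Finset.mem_filter] at hi hi'
  exact tsAdmissible_mem_unique hE hi.2 hi'.2

lemma tnormAux_add_single_le (hθ0 : 0 ≤ θ) (hθ1 : θ ≤ 1) {c : ℝ} (hc : |c| ≤ 1)
    (k : ℕ+) (m : ℕ) (w : ℕ+ →₀ ℝ) :
    tnormAux θ S m (w + Finsupp.single k c) ≤ tnormAux θ S m w + 1 := by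
  induction m generalizing w with
  | zero =>
    refine ciSup_le fun i => ?_
    rw [Finsupp.add_apply, Finsupp.single_apply]
    rcases eq_or_ne k i with rfl | h
    · rw [if_pos rfl]
      exact (abs_add_le _ _).trans (add_le_add (abs_le_tnormAux_zero w k) hc)
    · rw [if_neg h, add_zero]
      exact (abs_le_tnormAux_zero w i).trans (by linarith [zero_le_one (α := ℝ)])
  | succ m ih =>
    rw [tnormAux_succ]
    refine max_le ((ih w).trans (add_le_add_left (tnormAux_le_succ m w) 1))
      (Real.sSup_le ?_ (by linarith [tnormAux_nonneg (θ := θ) (S := S) (m + 1) w]))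
    rintro r ⟨d, E, hE, rfl⟩
    have hterm : ∀ i : Fin d,
        tnormAux θ S m (tsProj (E i) (w + Finsupp.single k c))
          ≤ tnormAux θ S m (tsProj (E i) w) + (if k ∈ E i then (1 : ℝ) else 0) := by
      intro i
      rw [tsProj_add, tsProj_single]
      split_ifs with h
      · exact ih _
      · rw [add_zero, add_zero]
    calc θ * ∑ i, tnormAux θ S m (tsProj (E i) (w + Finsupp.single k c))
        ≤ θ * ∑ i, (tnormAux θ S m (tsProj (E i) w) + (if k ∈ E i then (1 : ℝ) else 0)) :=
          mul_le_mul_of_nonneg_left (Finset.sum_le_sum fun i _ => hterm i) hθ0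
      _ = θ * ∑ i, tnormAux θ S m (tsProj (E i) w)
            + θ * ∑ i, (if k ∈ E i then (1 : ℝ) else 0) := by
          rw [Finset.sum_add_distrib, mul_add]
      _ ≤ tnormAux θ S (m + 1) w + 1 := by
          refine add_le_add (elem_le_tnormAux_succ hθ0 hθ1 hE) ?_
          calc θ * ∑ i, (if k ∈ E i then (1 : ℝ) else 0)
              ≤ 1 * 1 := by
                refine mul_le_mul hθ1 (sum_ite_mem_le_one hE k) ?_ zero_le_one
                exact Finset.sum_nonneg fun i _ => by positivity
            _ = 1 := one_mul 1

lemma tnormAux_erase_le (hθ0 : 0 ≤ θ) (hθ1 : θ ≤ 1) (k : ℕ+) (m : ℕ) (x : ℕ+ →₀ ℝ) :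
    tnormAux θ S m (x.erase k) ≤ tnormAux θ S m x := by
  induction m generalizing x with
  | zero =>
    refine ciSup_le fun i => ?_
    rw [Finsupp.erase_apply]
    split_ifs
    · rw [abs_zero]; exact tnormAux_nonneg 0 x
    · exact abs_le_tnormAux_zero x i
  | succ m ih =>
    rw [tnormAux_succ]
    refine max_le ((ih x).trans (tnormAux_le_succ m x))
      (Real.sSup_le ?_ (tnormAux_nonneg _ x))
    rintro r ⟨d, E, hE, rfl⟩
    calc θ * ∑ i, tnormAux θ S m (tsProj (E i) (x.erase k))
        ≤ θ * ∑ i, tnormAux θ S m (tsProj (E i) x) := by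
          refine mul_le_mul_of_nonneg_left (Finset.sum_le_sum fun i _ => ?_) hθ0
          rw [tsProj_erase]
          exact ih _
      _ ≤ tnormAux θ S (m + 1) x := elem_le_tnormAux_succ hθ0 hθ1 hE

/-- The key estimate: `‖θ·z + ε·e_j‖_m ≤ max(1, θ‖z‖_m + θ)` when `z j = 0`, `|ε| = 1`. -/
lemma tnormAux_perturb_le (hθ0 : 0 ≤ θ) (hθ1 : θ ≤ 1) {z : ℕ+ →₀ ℝ} {j : ℕ+}
    (hz : z j = 0) {c : ℝ} (hc : |c| = 1) (m : ℕ) :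
    tnormAux θ S m (θ • z + Finsupp.single j c)
      ≤ max 1 (θ * tnormAux θ S m z + θ) := by
  induction m with
  | zero =>
    refine ciSup_le fun i => ?_
    rw [Finsupp.add_apply, Finsupp.smul_apply, smul_eq_mul, Finsupp.single_apply]
    rcases eq_or_ne j i with rfl | h
    · rw [if_pos rfl, hz, mul_zero, zero_add, hc]
      exact le_max_left _ _
    · rw [if_neg h, add_zero, abs_mul, abs_of_nonneg hθ0]
      refine le_trans ?_ (le_max_right _ _)
      have := mul_le_mul_of_nonneg_left (abs_le_tnormAux_zero (θ := θ) (S := S) z i) hθ0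
      linarith
  | succ m ih =>
    rw [tnormAux_succ]
    refine max_le (ih.trans ?_) (Real.sSup_le ?_ ?_)
    · exact max_le_max le_rfl (add_le_add_left
        (mul_le_mul_of_nonneg_left (tnormAux_le_succ m z) hθ0) θ)
    · rintro r ⟨d, E, hE, rfl⟩
      have hterm : ∀ i : Fin d,
          tnormAux θ S m (tsProj (E i) (θ • z + Finsupp.single j c))
            ≤ θ * tnormAux θ S m (tsProj (E i) z) + (if j ∈ E i then (1 : ℝ) else 0) := by
        intro i
        rw [tsProj_add, tsProj_smul, tsProj_single]
        split_ifs with h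
        · exact (tnormAux_add_single_le hθ0 hθ1 hc.le j m _).trans
            (add_le_add_left (tnormAux_smul_le hθ0 hθ1 hθ0 m _) 1)
        · rw [add_zero, add_zero]
          exact tnormAux_smul_le hθ0 hθ1 hθ0 m _
      refine le_trans ?_ (le_max_right _ _)
      calc θ * ∑ i, tnormAux θ S m (tsProj (E i) (θ • z + Finsupp.single j c))
          ≤ θ * ∑ i, (θ * tnormAux θ S m (tsProj (E i) z)
              + (if j ∈ E i then (1 : ℝ) else 0)) :=
            mul_le_mul_of_nonneg_left (Finset.sum_le_sum fun i _ => hterm i) hθ0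
        _ = θ * (θ * ∑ i, tnormAux θ S m (tsProj (E i) z))
              + θ * ∑ i, (if j ∈ E i then (1 : ℝ) else 0) := by
            rw [Finset.sum_add_distrib, mul_add, ← Finset.mul_sum]
        _ ≤ θ * tnormAux θ S (m + 1) z + θ * 1 := by
            refine add_le_add
              (mul_le_mul_of_nonneg_left (elem_le_tnormAux_succ hθ0 hθ1 hE) hθ0)
              (mul_le_mul_of_nonneg_left (sum_ite_mem_le_one hE j) hθ0)
        _ = θ * tnormAux θ S (m + 1) z + θ := by rw [mul_one]
    · exact le_trans zero_le_one (le_max_left _ _)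

lemma tnorm_perturb_le (hθ0 : 0 ≤ θ) (hθ1 : θ ≤ 1) (a : ℕ+ →₀ ℝ) (j : ℕ+)
    {c : ℝ} (hc : |c| = 1) :
    tnorm θ S (θ • a.erase j + Finsupp.single j c) ≤ max 1 (θ * tnorm θ S a + θ) := by
  refine ciSup_le fun m => ?_
  refine (tnormAux_perturb_le hθ0 hθ1 (Finsupp.erase_same) hc m).trans
    (max_le_max le_rfl (add_le_add_left (mul_le_mul_of_nonneg_left ?_ hθ0) θ))
  exact (tnormAux_erase_le hθ0 hθ1 j m a).trans (tnormAux_le_tnorm hθ0 hθ1 m a)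

lemma one_le_tnorm_perturb (hθ0 : 0 ≤ θ) (hθ1 : θ ≤ 1) (a : ℕ+ →₀ ℝ) (j : ℕ+)
    {c : ℝ} (hc : |c| = 1) :
    1 ≤ tnorm θ S (θ • a.erase j + Finsupp.single j c) := by
  have happ : (θ • a.erase j + Finsupp.single j c) j = c := by
    rw [Finsupp.add_apply, Finsupp.smul_apply, Finsupp.erase_same, smul_zero, zero_add,
      Finsupp.single_eq_same]
  calc (1 : ℝ) = |c| := hc.symm
    _ = |(θ • a.erase j + Finsupp.single j c) j| := by rw [happ]
    _ ≤ _ := abs_le_tnorm hθ0 hθ1 _ j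

end TsAux

open TsAux Filter Topology

/-- If `y = ∑ᵢ bᵢ eᵢ` lies in the unit sphere of `T[θ, S_n]`, `j` is a
coordinate and `ε = ±1`, then the vector `x = ∑_{i ≠ j} θ bᵢ eᵢ + ε e_j` lies in the
unit sphere. -/
theorem tsirelson_perturbation_in_sphere
    (θ : ℝ) (hθ0 : 0 < θ) (hθ : θ ≤ 1 / 2) (n : ℕ) (hn : 1 ≤ n)
    (X : Type*) [NormedAddCommGroup X] [NormedSpace ℝ X] (e : ℕ+ → X)
    (hX : IsTsirelsonSpace θ n X e)
    (y : X) (hy : ‖y‖ = 1) (b : ℕ+ → ℝ) (hb : HasSum (fun i => b i • e i) y)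
    (j : ℕ+) (ε : ℝ) (hε : ε = 1 ∨ ε = -1) :
    ∃ x : X, HasSum (fun i => (if i = j then ε else θ * b i) • e i) x ∧ ‖x‖ = 1 := by
  classical
  have hθ0' : (0 : ℝ) ≤ θ := hθ0.le
  have hθ1 : θ ≤ 1 := by linarith
  have hε1 : |ε| = 1 := by rcases hε with rfl | rfl <;> norm_num
  set emb : (ℕ+ →₀ ℝ) → X := fun a => a.sum fun i c => c • e i with hembdef
  have emb_add : ∀ u v : ℕ+ →₀ ℝ, emb (u + v) = emb u + emb v := fun u v =>
    Finsupp.sum_add_index' (fun i => zero_smul ℝ (e i)) (fun i c1 c2 => add_smul c1 c2 (e i))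
  have emb_single : ∀ (k : ℕ+) (c : ℝ), emb (Finsupp.single k c) = c • e k := fun k c =>
    Finsupp.sum_single_index (zero_smul ℝ (e k))
  have emb_smul : ∀ (t : ℝ) (u : ℕ+ →₀ ℝ), emb (t • u) = t • emb u := by
    intro t u
    rw [hembdef]
    simp only
    rw [Finsupp.sum_smul_index' (fun i => zero_smul ℝ (e i)), Finsupp.smul_sum]
    exact Finsupp.sum_congr fun i _ => smul_assoc t (u i) (e i)
  have emb_erase : ∀ (u : ℕ+ →₀ ℝ) (k : ℕ+), emb (u.erase k) = emb u - u k • e k := by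
    intro u k
    have h := Finsupp.erase_add_single k u
    have h2 : emb (u.erase k) + u k • e k = emb u := by
      rw [← emb_single k (u k), ← emb_add, h]
    exact eq_sub_of_add_eq h2
  -- the limit point
  set x : X := θ • y + (ε - θ * b j) • e j with hxdef
  refine ⟨x, ?_, ?_⟩
  · -- HasSum
    have h1 : HasSum (fun i => θ • (b i • e i)) (θ • y) := hb.const_smul θ
    have h2 : HasSum (fun i : ℕ+ => if i = j then (ε - θ * b j) • e j else 0)
        ((ε - θ * b j) • e j) := hasSum_ite_eq j _
    have h3 := h1.add h2
    have hfun : (fun i => (if i = j then ε else θ * b i) • e i)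
        = fun i => θ • (b i • e i) + (if i = j then (ε - θ * b j) • e j else 0) := by
      funext i
      rcases eq_or_ne i j with rfl | h
      · rw [if_pos rfl, if_pos rfl, smul_smul, sub_smul]
        abel
      · rw [if_neg h, if_neg h, add_zero, smul_smul]
    rw [hfun]
    exact h3
  · -- the norm is 1
    have embed_aF : ∀ F : Finset ℕ+,
        emb (Finsupp.indicator F (fun i _ => b i)) = ∑ i ∈ F, b i • e i := by
      intro F
      rw [hembdef]
      simp only
      rw [Finsupp.sum_of_support_subset _ (Finsupp.support_indicator_subset F _)
        _ (fun i _ => zero_smul ℝ (e i))]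
      exact Finset.sum_congr rfl fun i hi => by rw [Finsupp.indicator_of_mem hi]
    have haFj : ∀ F : Finset ℕ+, j ∈ F →
        (Finsupp.indicator F (fun i _ => b i)) j = b j := fun F hj =>
      Finsupp.indicator_of_mem hj _
    set aF : Finset ℕ+ → (ℕ+ →₀ ℝ) := fun F => Finsupp.indicator F (fun i _ => b i)
      with haFdef
    set cF : Finset ℕ+ → (ℕ+ →₀ ℝ) := fun F => θ • (aF F).erase j + Finsupp.single j ε
      with hcFdef
    have embed_cF : ∀ F : Finset ℕ+,
        emb (cF F) = θ • emb (aF F) - (θ * (aF F) j) • e j + ε • e j := by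
      intro F
      show emb (θ • (aF F).erase j + Finsupp.single j ε) = _
      rw [emb_add, emb_smul, emb_single, emb_erase, smul_sub, smul_smul]
    -- tendsto statements
    have hty : Tendsto (fun F => emb (aF F)) atTop (𝓝 y) := by
      have : (fun F => emb (aF F)) = fun F : Finset ℕ+ => ∑ i ∈ F, b i • e i :=
        funext embed_aF
      rw [this]
      exact hb
    have htx : Tendsto (fun F => emb (cF F)) atTop (𝓝 x) := by
      have base : Tendsto (fun F => θ • emb (aF F) - (θ * b j) • e j + ε • e j) atTop
          (𝓝 (θ • y - (θ * b j) • e j + ε • e j)) :=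
        ((hty.const_smul θ).sub tendsto_const_nhds).add tendsto_const_nhds
      have hxeq : x = θ • y - (θ * b j) • e j + ε • e j := by
        rw [hxdef, sub_smul]
        abel
      rw [hxeq]
      refine base.congr' ?_
      filter_upwards [eventually_ge_atTop ({j} : Finset ℕ+)] with F hF
      have hjF : j ∈ F := hF (Finset.mem_singleton_self j)
      rw [embed_cF F, haFj F hjF]
    have hnormx : Tendsto (fun F => ‖emb (cF F)‖) atTop (𝓝 ‖x‖) := htx.norm
    have hlow : ∀ F : Finset ℕ+, (1 : ℝ) ≤ ‖emb (cF F)‖ := by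
      intro F
      rw [hX.norm_embed (cF F)]
      exact one_le_tnorm_perturb hθ0' hθ1 (aF F) j hε1
    have hup : ∀ F : Finset ℕ+, ‖emb (cF F)‖ ≤ max 1 (θ * ‖emb (aF F)‖ + θ) := by
      intro F
      rw [hX.norm_embed (cF F), hX.norm_embed (aF F)]
      exact tnorm_perturb_le hθ0' hθ1 (aF F) j hε1
    have hnormaF : Tendsto (fun F => ‖emb (aF F)‖) atTop (𝓝 1) := by
      have := hty.norm
      rwa [hy] at this
    have hupT : Tendsto (fun F => max 1 (θ * ‖emb (aF F)‖ + θ)) atTop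
        (𝓝 (max 1 (θ * 1 + θ))) :=
      tendsto_const_nhds.max ((hnormaF.const_mul θ).add_const θ)
    have hmax1 : max (1 : ℝ) (θ * 1 + θ) = 1 := max_eq_left (by linarith)
    have hle : ‖x‖ ≤ max 1 (θ * 1 + θ) := le_of_tendsto_of_tendsto' hnormx hupT hup
    have hge : (1 : ℝ) ≤ ‖x‖ := ge_of_tendsto' hnormx hlow
    rw [hmax1] at hle
    linarith
end
end

section
/- Let θ ∈ (0, 1/2] be such that θ⁻¹ is not an integer, let 1 ≤ i ≤ ⌈θ⁻¹⌉ − 1, and let j₁ < j₂ < ⋯ < j_{⌈θ⁻¹⌉−1} be positive integers with ⌈θ⁻¹⌉ < j₁. Then ‖ e_i − Σ_{k=1}^{⌈θ⁻¹⌉−1} e_{j_k} ‖_{θ,S₁} = 1. -/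
open scoped BigOperators

noncomputable section

lemma tsProj_zero (E : Finset ℕ+) : tsProj E (0 : ℕ+ →₀ ℝ) = 0 := by
  ext a; simp [tsProj, Finsupp.filter_apply]

lemma tnormAux_zero (θ : ℝ) (S : Set (Finset ℕ+)) :
    ∀ m, tnormAux θ S m (0 : ℕ+ →₀ ℝ) = 0 := by
  intro m
  induction m with
  | zero => simp [tnormAux]
  | succ m ih =>
    rw [tnormAux, ih]
    refine max_eq_left (Real.sSup_le ?_ le_rfl)
    rintro r ⟨d, E, -, rfl⟩
    simp [tsProj_zero, ih]

/-- If `θ⁻¹` is not an integer, `1 ≤ i ≤ ⌈θ⁻¹⌉ − 1` and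
`⌈θ⁻¹⌉ < j₁ < ⋯ < j_{⌈θ⁻¹⌉−1}`, then `‖eᵢ − ∑ₖ e_{j_k}‖_{θ,S₁} = 1`. -/
theorem tnorm_unit_minus_sum
    (θ : ℝ) (hθ0 : 0 < θ) (hθ : θ ≤ 1 / 2)
    (hni : ∀ k : ℕ, θ⁻¹ ≠ (k : ℝ))
    (i : ℕ+) (hi : (i : ℕ) ≤ ⌈θ⁻¹⌉₊ - 1)
    (j : Fin (⌈θ⁻¹⌉₊ - 1) → ℕ+) (hmono : StrictMono j)
    (hj : ∀ k, ⌈θ⁻¹⌉₊ < ((j k : ℕ+) : ℕ)) :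
    tnorm θ (Schreier 1)
      (Finsupp.single i 1 - ∑ k, Finsupp.single (j k) (1 : ℝ)) = 1 := by
  classical
  set x : ℕ+ →₀ ℝ := Finsupp.single i 1 - ∑ k, Finsupp.single (j k) (1 : ℝ) with hxdef
  have hθinv : θ * θ⁻¹ = 1 := mul_inv_cancel₀ hθ0.ne'
  have hN1 : 1 ≤ ⌈θ⁻¹⌉₊ := Nat.one_le_ceil_iff.mpr (inv_pos.mpr hθ0)
  have hNlt : ((⌈θ⁻¹⌉₊ - 1 : ℕ) : ℝ) < θ⁻¹ := Nat.lt_ceil.mp (by omega)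
  have key : θ * ((⌈θ⁻¹⌉₊ - 1 : ℕ) : ℝ) < 1 := by
    calc θ * ((⌈θ⁻¹⌉₊ - 1 : ℕ) : ℝ) < θ * θ⁻¹ := mul_lt_mul_of_pos_left hNlt hθ0
      _ = 1 := hθinv
  have hij : ∀ k, (i : ℕ) < (j k : ℕ) :=
    fun k => lt_of_le_of_lt (le_trans hi (Nat.sub_le ⌈θ⁻¹⌉₊ 1)) (hj k)
  have hjne : ∀ k, j k ≠ i := by
    intro k h
    have := hij k
    rw [h] at this
    omega
  have happ : ∀ a : ℕ+,
      x a = (Finsupp.single i (1 : ℝ)) a - ∑ k, (Finsupp.single (j k) (1 : ℝ)) a := by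
    intro a
    rw [hxdef]
    simp [Finsupp.sub_apply, Finsupp.finset_sum_apply]
  have hxi : x i = 1 := by
    have h0 : ∑ k, (Finsupp.single (j k) (1 : ℝ)) i = 0 :=
      Finset.sum_eq_zero fun k _ => Finsupp.single_eq_of_ne' (hjne k)
    rw [happ, h0, Finsupp.single_eq_same, sub_zero]
  have hxj : ∀ k, x (j k) = -1 := by
    intro k
    have h0 : ∑ k', (Finsupp.single (j k') (1 : ℝ)) (j k) = 1 := by
      rw [Finset.sum_eq_single_of_mem k (Finset.mem_univ k)]
      · exact Finsupp.single_eq_same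
      · intro k' _ hk'
        exact Finsupp.single_eq_of_ne' fun h => hk' (hmono.injective h)
    rw [happ, h0, Finsupp.single_eq_of_ne' fun h => hjne k h.symm]
    norm_num
  have hx0 : ∀ a : ℕ+, a ≠ i → a ∉ Finset.univ.image j → x a = 0 := by
    intro a ha ha'
    have h0 : ∑ k, (Finsupp.single (j k) (1 : ℝ)) a = 0 :=
      Finset.sum_eq_zero fun k _ => Finsupp.single_eq_of_ne' fun h =>
        ha' (Finset.mem_image.mpr ⟨k, Finset.mem_univ k, h⟩)
    rw [happ, h0, Finsupp.single_eq_of_ne' (Ne.symm ha), sub_zero]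
  have habs : ∀ a : ℕ+, |x a| ≤ 1 := by
    intro a
    by_cases h : a = i
    · rw [h, hxi]; norm_num
    · by_cases h' : a ∈ Finset.univ.image j
      · obtain ⟨k, -, rfl⟩ := Finset.mem_image.mp h'
        rw [hxj k]; norm_num
      · rw [hx0 a h h']; norm_num
  have main : ∀ m (y : ℕ+ →₀ ℝ), (∀ a, y a = x a ∨ y a = 0) →
      tnormAux θ (Schreier 1) m y ≤ 1 := by
    intro m
    induction m with
    | zero =>
      intro y hy
      refine ciSup_le fun a => ?_
      rcases hy a with h | h <;> rw [h]
      · exact habs a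
      · simp
    | succ m ih =>
      intro y hy
      rw [tnormAux]
      refine max_le (ih y hy) (Real.sSup_le ?_ zero_le_one)
      rintro r ⟨d, E, ⟨hne, hord, μ, hμ, hμS⟩, rfl⟩
      have hμmono : StrictMono μ := fun t t' h => hord t t' h (μ t) (hμ t).1 (μ t') (hμ t').1
      have hμcard : (Finset.univ.image μ).card = d := by
        rw [Finset.card_image_of_injective _ hμmono.injective, Finset.card_univ,
          Fintype.card_fin]
      have hS1 : ∀ a ∈ Finset.univ.image μ, (Finset.univ.image μ).card ≤ (a : ℕ) := hμS
      set T : Finset (Fin d) := Finset.univ.filter (fun t => tsProj (E t) y ≠ 0) with hT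
      have hsum : ∑ t, tnormAux θ (Schreier 1) m (tsProj (E t) y)
          = ∑ t ∈ T, tnormAux θ (Schreier 1) m (tsProj (E t) y) := by
        refine (Finset.sum_subset (Finset.filter_subset _ _) ?_).symm
        intro t _ ht
        have h0 : tsProj (E t) y = 0 := by
          by_contra h
          exact ht (Finset.mem_filter.mpr ⟨Finset.mem_univ t, h⟩)
        rw [h0, tnormAux_zero]
      have hyproj : ∀ t : Fin d, ∀ a, (tsProj (E t) y) a = x a ∨ (tsProj (E t) y) a = 0 := by
        intro t a
        rw [tsProj, Finsupp.filter_apply]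
        split
        · exact hy a
        · exact Or.inr rfl
      have hterm : ∀ t ∈ T, tnormAux θ (Schreier 1) m (tsProj (E t) y) ≤ 1 :=
        fun t _ => ih _ (hyproj t)
      have hTcard : T.card ≤ ⌈θ⁻¹⌉₊ - 1 := by
        by_cases hd : d ≤ ⌈θ⁻¹⌉₊ - 1
        · refine le_trans (le_trans (Finset.card_filter_le _ _) ?_) hd
          simp
        · push_neg at hd
          have hNd : ⌈θ⁻¹⌉₊ ≤ d := by omega
          have hwit : ∀ t ∈ T, ∃ a : ℕ+, a ∈ E t ∧ y a ≠ 0 := by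
            intro t ht
            have h := (Finset.mem_filter.mp ht).2
            obtain ⟨a, ha⟩ := Finsupp.ne_iff.mp h
            rw [tsProj, Finsupp.filter_apply] at ha
            by_cases hmem : a ∈ E t
            · refine ⟨a, hmem, ?_⟩
              simpa [hmem] using ha
            · simp [hmem] at ha
          choose! f hf1 hf2 using hwit
          have hfj : ∀ t ∈ T, f t ∈ Finset.univ.image j := by
            intro t ht
            have hE := hf1 t ht
            have hylow : d ≤ ((f t : ℕ+) : ℕ) := by
              have h1 : μ t ≤ f t := (hμ t).2 hE
              have h2 := hS1 (μ t) (Finset.mem_image_of_mem μ (Finset.mem_univ t))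
              rw [hμcard] at h2
              have h3 : ((μ t : ℕ+) : ℕ) ≤ ((f t : ℕ+) : ℕ) := by exact_mod_cast h1
              omega
            have hne_i : f t ≠ i := by
              intro h
              rw [h] at hylow
              omega
            by_contra hnot
            rcases hy (f t) with hcase | hcase
            · exact hf2 t ht (by rw [hcase, hx0 (f t) hne_i hnot])
            · exact hf2 t ht hcase
          have hinj : Set.InjOn f ↑T := by
            intro t ht t' ht' hft
            by_contra hne'
            rcases lt_or_gt_of_ne hne' with h | h
            · exact absurd hft (ne_of_lt (hord t t' h _ (hf1 t ht) _ (hf1 t' ht')))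
            · exact absurd hft.symm (ne_of_lt (hord t' t h _ (hf1 t' ht') _ (hf1 t ht)))
          calc T.card ≤ (Finset.univ.image j).card :=
                Finset.card_le_card_of_injOn f hfj hinj
            _ ≤ (Finset.univ : Finset (Fin (⌈θ⁻¹⌉₊ - 1))).card := Finset.card_image_le
            _ = ⌈θ⁻¹⌉₊ - 1 := by simp
      calc θ * ∑ t, tnormAux θ (Schreier 1) m (tsProj (E t) y)
          = θ * ∑ t ∈ T, tnormAux θ (Schreier 1) m (tsProj (E t) y) := by rw [hsum]
        _ ≤ θ * (T.card : ℝ) := by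
            refine mul_le_mul_of_nonneg_left ?_ hθ0.le
            calc ∑ t ∈ T, tnormAux θ (Schreier 1) m (tsProj (E t) y)
                ≤ ∑ _t ∈ T, (1 : ℝ) := Finset.sum_le_sum hterm
              _ = T.card := by simp
        _ ≤ θ * ((⌈θ⁻¹⌉₊ - 1 : ℕ) : ℝ) := by
            refine mul_le_mul_of_nonneg_left ?_ hθ0.le
            exact_mod_cast hTcard
        _ ≤ 1 := key.le
  have habove : BddAbove (Set.range fun m => tnormAux θ (Schreier 1) m x) :=
    ⟨1, by rintro r ⟨m, rfl⟩; exact main m x fun a => Or.inl rfl⟩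
  have upper : tnorm θ (Schreier 1) x ≤ 1 := ciSup_le fun m => main m x fun a => Or.inl rfl
  have lower : 1 ≤ tnorm θ (Schreier 1) x := by
    have hb : BddAbove (Set.range fun a : ℕ+ => |x a|) :=
      ⟨1, by rintro r ⟨a, rfl⟩; exact habs a⟩
    have h0 : (1 : ℝ) ≤ tnormAux θ (Schreier 1) 0 x := by
      calc (1 : ℝ) = |x i| := by rw [hxi]; norm_num
        _ ≤ ⨆ a, |x a| := le_ciSup hb i
        _ = tnormAux θ (Schreier 1) 0 x := rfl
    exact h0.trans (le_ciSup habove 0)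
  exact le_antisymm upper lower
end
end
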